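/- Let N ≥ 2 and let (u,v) be a classical solution on ℝ^N of the Lotka–Volterra competition–diffusion system, taking values in [0,1]×[0,1], whose initial datum (u(0,·), v(0,·)) = (u₀,v₀) is admissible. Then for every e ∈ 𝕊^{N−1} and every c > 2√(r₁)·max(√(d₁), √(d₂/2)), sup{ u(t,x) + |1 − v(t,x)| : x ∈ ℝ^N, x·e ≥ ct } → 0 as t → +∞; in particular the same convergence holds for the supremum over { x : |x| ≥ ct }. -/

import Mathlib

open Set Metric Filter Topology ENNReal

noncomputable section

/-- Euclidean space `ℝ^N`. -/
abbrev Euc (N : ℕ) := EuclideanSpace ℝ (Fin N)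

variable {N : ℕ}

/-- `Ω` is strongly unbounded in the direction `e`. -/
def StronglyUnbounded (Ω : Set (Euc N)) (e : Euc N) : Prop :=
  ∃ R : ℝ, 0 ≤ R ∧ ∃ s₀ : ℝ, ∀ s : ℝ, s₀ ≤ s →
    (closedBall (s • e) R ∩ closure Ω).Nonempty

/-- `R(e)`: the infimum of the admissible radii in the direction `e`. -/
def dirRadius (Ω : Set (Euc N)) (e : Euc N) : ℝ :=
  sInf {R : ℝ | 0 ≤ R ∧ ∃ s₀ : ℝ, ∀ s : ℝ, s₀ ≤ s →
    (closedBall (s • e) R ∩ closure Ω).Nonempty}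

/-- `R(e,z)`, as an extended nonnegative real. -/
def dirRadiusAt (Ω : Set (Euc N)) (e z : Euc N) : ℝ≥0∞ :=
  sInf {r : ℝ≥0∞ | ∃ R : ℝ, 0 ≤ R ∧ r = ENNReal.ofReal R ∧ ∃ s₀ : ℝ, ∀ s : ℝ, s₀ ≤ s →
    (closedBall (z + s • e) R ∩ closure Ω).Nonempty}

/-- The set of speeds `c > 0` entering the definition of the upper spreading speed `w*(e)`. -/
def upperSpeedSet (Ω : Set (Euc N)) (e : Euc N) (u v : ℝ → Euc N → ℝ) : Set ℝ :=
  {c : ℝ | 0 < c ∧ ∀ A : ℝ, dirRadius Ω e < A → ∀ ε > (0:ℝ), ∃ T : ℝ, ∀ t : ℝ, T ≤ t →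
    ∀ s : ℝ, c * t ≤ s → ∀ x ∈ closedBall (s • e) A ∩ closure Ω,
      |u t x| + |1 - v t x| ≤ ε}

/-- The upper spreading speed `w*(e)` in the direction `e`, in `[0,+∞]`. -/
def wUpper (Ω : Set (Euc N)) (e : Euc N) (u v : ℝ → Euc N → ℝ) : ℝ≥0∞ :=
  sInf (ENNReal.ofReal '' upperSpeedSet Ω e u v)

/-- The set of speeds `c > 0` entering the definition of `w*(e,z)`. -/
def upperSpeedSetAt (Ω : Set (Euc N)) (e z : Euc N) (u v : ℝ → Euc N → ℝ) : Set ℝ :=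
  {c : ℝ | 0 < c ∧ ∃ A : ℝ, 0 < A ∧
    (∃ s₀ : ℝ, ∀ s : ℝ, s₀ ≤ s → (closedBall (z + s • e) A ∩ closure Ω).Nonempty) ∧
    ∀ ε > (0:ℝ), ∃ T : ℝ, ∀ t : ℝ, T ≤ t → ∀ s : ℝ, c * t ≤ s →
      ∀ x ∈ closedBall (z + s • e) A ∩ closure Ω, |u t x| + |1 - v t x| ≤ ε}

/-- The upper spreading speed `w*(e,z)` along the half-line `z + ℝ₊ e`, in `[0,+∞]`. -/
def wUpperAt (Ω : Set (Euc N)) (e z : Euc N) (u v : ℝ → Euc N → ℝ) : ℝ≥0∞ :=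
  sInf (ENNReal.ofReal '' upperSpeedSetAt Ω e z u v)

/-- The set of speeds `c > 0` entering the definition of the lower spreading speed `w_*(e)`. -/
def lowerSpeedSet (Ω : Set (Euc N)) (e : Euc N) (u v : ℝ → Euc N → ℝ) : Set ℝ :=
  {c : ℝ | 0 < c ∧ ∀ A : ℝ, dirRadius Ω e < A → ∀ ε > (0:ℝ), ∃ T : ℝ, ∀ τ t : ℝ,
    T ≤ τ → T ≤ t → τ ≤ c * t → ∀ s : ℝ, τ ≤ s → s ≤ c * t →
    ∀ x ∈ closedBall (s • e) A ∩ closure Ω, |1 - u t x| + |v t x| ≤ ε}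

/-- The lower spreading speed `w_*(e)` in the direction `e`, in `[0,+∞]` (`0` if no admissible speed). -/
def wLower (Ω : Set (Euc N)) (e : Euc N) (u v : ℝ → Euc N → ℝ) : ℝ≥0∞ :=
  sSup (ENNReal.ofReal '' lowerSpeedSet Ω e u v)

/-- The set of speeds `c > 0` entering the definition of `w_*(e,z)`. -/
def lowerSpeedSetAt (Ω : Set (Euc N)) (e z : Euc N) (u v : ℝ → Euc N → ℝ) : Set ℝ :=
  {c : ℝ | 0 < c ∧ ∃ A : ℝ, 0 < A ∧
    (∃ s₀ : ℝ, ∀ s : ℝ, s₀ ≤ s → (closedBall (z + s • e) A ∩ closure Ω).Nonempty) ∧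
    ∀ ε > (0:ℝ), ∃ T : ℝ, ∀ τ t : ℝ, T ≤ τ → T ≤ t → τ ≤ c * t →
      ∀ s : ℝ, τ ≤ s → s ≤ c * t →
      ∀ x ∈ closedBall (z + s • e) A ∩ closure Ω, |1 - u t x| + |v t x| ≤ ε}

/-- The lower spreading speed `w_*(e,z)` along the half-line `z + ℝ₊ e`, in `[0,+∞]`. -/
def wLowerAt (Ω : Set (Euc N)) (e z : Euc N) (u v : ℝ → Euc N → ℝ) : ℝ≥0∞ :=
  sSup (ENNReal.ofReal '' lowerSpeedSetAt Ω e z u v)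

/-- The Laplacian of a function on `ℝ^N`, as the sum of the second derivatives in the
coordinate directions. -/
def lap (f : Euc N → ℝ) (x : Euc N) : ℝ :=
  ∑ i : Fin N, fderiv ℝ (fun y => fderiv ℝ f y (EuclideanSpace.single i 1)) x
    (EuclideanSpace.single i 1)

/-- Monostability assumptions on the parameters of the Lotka-Volterra system. -/
def LVParams (d₁ d₂ r₁ r₂ a₁ a₂ : ℝ) : Prop :=
  0 < d₁ ∧ 0 < d₂ ∧ 0 < r₁ ∧ 0 < r₂ ∧ 0 < a₁ ∧ a₁ < 1 ∧ 1 < a₂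

/-- A classical solution of the Lotka-Volterra competition-diffusion system on the whole
space `ℝ^N`: bounded and continuous on `[0,∞) × ℝ^N`, `C¹` in `t` and `C²` in `x` on
`(0,∞) × ℝ^N`, satisfying the system pointwise. -/
structure IsLVSolution (d₁ d₂ r₁ r₂ a₁ a₂ : ℝ) (u v : ℝ → Euc N → ℝ) : Prop where
  contu : ContinuousOn (fun p : ℝ × Euc N => u p.1 p.2) (Ici 0 ×ˢ univ)
  contv : ContinuousOn (fun p : ℝ × Euc N => v p.1 p.2) (Ici 0 ×ˢ univ)
  bounded : ∃ M : ℝ, ∀ t : ℝ, 0 ≤ t → ∀ x : Euc N, |u t x| ≤ M ∧ |v t x| ≤ M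
  smooth_t : ∀ x : Euc N, ContDiffOn ℝ 1 (fun t => u t x) (Ioi 0) ∧
    ContDiffOn ℝ 1 (fun t => v t x) (Ioi 0)
  smooth_x : ∀ t : ℝ, 0 < t → ContDiff ℝ 2 (u t) ∧ ContDiff ℝ 2 (v t)
  eqn_u : ∀ t : ℝ, 0 < t → ∀ x : Euc N, deriv (fun τ => u τ x) t =
    d₁ * lap (u t) x + r₁ * u t x * (1 - u t x - a₁ * v t x)
  eqn_v : ∀ t : ℝ, 0 < t → ∀ x : Euc N, deriv (fun τ => v τ x) t =
    d₂ * lap (v t) x + r₂ * v t x * (1 - v t x - a₂ * u t x)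

/-- An admissible initial datum: continuous with values in `[0,1]`, `u₀ ≢ 0`, and
`(u₀,v₀) = (0,1)` outside a compact set. -/
def AdmissibleInit (u₀ v₀ : Euc N → ℝ) : Prop :=
  Continuous u₀ ∧ Continuous v₀ ∧ (∀ x, u₀ x ∈ Icc (0:ℝ) 1 ∧ v₀ x ∈ Icc (0:ℝ) 1) ∧
  (∃ x, u₀ x ≠ 0) ∧ ∃ K : Set (Euc N), IsCompact K ∧ ∀ x ∉ K, u₀ x = 0 ∧ v₀ x = 1

/-- A classical solution of the Lotka-Volterra competition-diffusion system on a domain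
`Ω ⊆ ℝ^N` (no boundary condition): continuous on `[0,∞) × Ω̄`, `C¹` in `t` and `C²` in `x`
on `(0,∞) × Ω`, satisfying the system pointwise on `(0,∞) × Ω`. -/
structure IsLVSolutionOn (d₁ d₂ r₁ r₂ a₁ a₂ : ℝ) (Ω : Set (Euc N))
    (u v : ℝ → Euc N → ℝ) : Prop where
  contu : ContinuousOn (fun p : ℝ × Euc N => u p.1 p.2) (Ici 0 ×ˢ closure Ω)
  contv : ContinuousOn (fun p : ℝ × Euc N => v p.1 p.2) (Ici 0 ×ˢ closure Ω)
  smooth_t : ∀ x ∈ Ω, ContDiffOn ℝ 1 (fun t => u t x) (Ioi 0) ∧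
    ContDiffOn ℝ 1 (fun t => v t x) (Ioi 0)
  smooth_x : ∀ t : ℝ, 0 < t → ContDiffOn ℝ 2 (u t) Ω ∧ ContDiffOn ℝ 2 (v t) Ω
  eqn_u : ∀ t : ℝ, 0 < t → ∀ x ∈ Ω, deriv (fun τ => u τ x) t =
    d₁ * lap (u t) x + r₁ * u t x * (1 - u t x - a₁ * v t x)
  eqn_v : ∀ t : ℝ, 0 < t → ∀ x ∈ Ω, deriv (fun τ => v τ x) t =
    d₂ * lap (v t) x + r₂ * v t x * (1 - v t x - a₂ * u t x)

/-- `Ω` has the interior ball property with radius `ε₀`. -/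
def InteriorBallProperty (Ω : Set (Euc N)) (ε₀ : ℝ) : Prop :=
  ∀ x ∈ frontier Ω, ∃ y : Euc N, ball y ε₀ ⊆ Ω ∧ dist x y = ε₀

/-- The geodesic distance in `Ω̄`: the infimum of the lengths (total variations) of
continuous paths joining `x` to `y` within `Ω̄`, `+∞` if there is no rectifiable path. -/
def geoDist (Ω : Set (Euc N)) (x y : Euc N) : ℝ≥0∞ :=
  sInf {L : ℝ≥0∞ | ∃ γ : ℝ → Euc N, ContinuousOn γ (Icc 0 1) ∧ γ 0 = x ∧ γ 1 = y ∧
    MapsTo γ (Icc 0 1) (closure Ω) ∧ L = eVariationOn γ (Icc 0 1)}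

/-- Hypothesis `H_{y,z}`: the points `y` and `z` are asymptotically connected in the
direction `e` within `Ω`. -/
def HypAsympConnected (Ω : Set (Euc N)) (e y z : Euc N) : Prop :=
  ∃ Ry Rz : ℝ, dirRadiusAt Ω e y < ENNReal.ofReal Ry ∧ dirRadiusAt Ω e z < ENNReal.ofReal Rz ∧
    ∃ C : ℝ≥0∞, C ≠ ⊤ ∧ ∃ s₀ : ℝ, ∀ s : ℝ, s₀ ≤ s →
      ∀ y' ∈ closedBall (y + s • e) Ry ∩ closure Ω,
      ∀ z' ∈ closedBall (z + s • e) Rz ∩ closure Ω, geoDist Ω y' z' ≤ C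

lemma contDiff_fderiv_apply {f : Euc N → ℝ} (hf : ContDiff ℝ 2 f) (w : Euc N) :
    ContDiff ℝ 1 (fun y => fderiv ℝ f y w) :=
  (ContinuousLinearMap.apply ℝ ℝ w).contDiff.comp (hf.fderiv_right (by norm_num))

lemma lineHasDeriv {f : Euc N → ℝ} (hf : Differentiable ℝ f) (x w : Euc N) (s : ℝ) :
    HasDerivAt (fun s : ℝ => f (x + s • w)) (fderiv ℝ f (x + s • w) w) s := by
  have hγ : HasDerivAt (fun s : ℝ => x + s • w) w s :=
    by simpa using (((hasDerivAt_id s).smul_const w).const_add x)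
  have := (hf (x + s • w)).hasFDerivAt.comp_hasDerivAt s hγ
  exact this

lemma secondDeriv_nonpos_of_isLocalMax {f : Euc N → ℝ} (hf : ContDiff ℝ 2 f) {x₀ : Euc N}
    (hmax : IsLocalMax f x₀) (w : Euc N) :
    fderiv ℝ (fun y => fderiv ℝ f y w) x₀ w ≤ 0 := by
  by_contra hpos
  push_neg at hpos
  set g₁ : Euc N → ℝ := fun y => fderiv ℝ f y w with hg₁
  have hg₁c : ContDiff ℝ 1 g₁ := contDiff_fderiv_apply hf w
  have hfd : Differentiable ℝ f := hf.differentiable (by norm_num)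
  have hg₁d : Differentiable ℝ g₁ := hg₁c.differentiable (by norm_num)
  -- q : restriction to the line
  set q : ℝ → ℝ := fun s => f (x₀ + s • w) with hq
  set g : ℝ → ℝ := fun s => g₁ (x₀ + s • w) with hg
  have hqd : ∀ s, HasDerivAt q (g s) s := fun s => lineHasDeriv hfd x₀ w s
  have hgd : ∀ s, HasDerivAt g (fderiv ℝ g₁ (x₀ + s • w) w) s := fun s =>
    lineHasDeriv hg₁d x₀ w s
  have hx0 : x₀ + (0:ℝ) • w = x₀ := by simp
  -- local max of q at 0
  have hqmax : IsLocalMax q 0 := by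
    have hc : ContinuousAt (fun s : ℝ => x₀ + s • w) 0 := by fun_prop
    have : Tendsto (fun s : ℝ => x₀ + s • w) (𝓝 0) (𝓝 x₀) := by
      simpa [hx0] using hc.tendsto
    simpa [IsLocalMax, IsMaxFilter, hq, hx0] using (this.eventually hmax)
  -- deriv g continuous and positive near 0
  have hcont : Continuous fun s : ℝ => fderiv ℝ g₁ (x₀ + s • w) w := by
    have h1 : Continuous (fderiv ℝ g₁) :=
      (hg₁c.fderiv_right (m := 0) (by norm_num)).continuous
    exact (ContinuousLinearMap.apply ℝ ℝ w).continuous.comp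
      (h1.comp (by fun_prop))
  have h0 : (0:ℝ) < fderiv ℝ g₁ (x₀ + (0:ℝ) • w) w := by rw [hx0]; exact hpos
  obtain ⟨η, hη, hball⟩ := Metric.eventually_nhds_iff.mp
    ((hcont.tendsto 0).eventually (eventually_gt_nhds h0))
  -- g strict mono on Ioo (-η) η
  have hgmono : StrictMonoOn g (Ioo (-η) η) := by
    apply strictMonoOn_of_deriv_pos (convex_Ioo _ _)
      (Continuous.continuousOn (by
        exact (hg₁c.continuous).comp (by fun_prop)))
    intro s hs
    rw [interior_Ioo] at hs
    rw [(hgd s).deriv]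
    apply hball
    simp [abs_lt]
    constructor <;> [linarith [hs.1]; exact hs.2]
  have hg0 : g 0 = 0 := by
    have : deriv q 0 = 0 := hqmax.deriv_eq_zero
    rw [← (hqd 0).deriv]; exact this
  -- hence g > 0 on (0, η), so q strictly increasing on [0, η/2]
  have hqmono : StrictMonoOn q (Icc 0 (η/2)) := by
    apply strictMonoOn_of_deriv_pos (convex_Icc _ _)
      (Continuous.continuousOn (by exact hfd.continuous.comp (by fun_prop)))
    intro s hs
    rw [interior_Icc] at hs
    rw [(hqd s).deriv]
    have h0mem : (0:ℝ) ∈ Ioo (-η) η := by constructor <;> linarith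
    have hsmem : s ∈ Ioo (-η) η := by constructor <;> [linarith [hs.1]; linarith [hs.2]]
    have := hgmono h0mem hsmem hs.1
    linarith [hg0 ▸ this]
  obtain ⟨δ, hδ, hsmall⟩ := Metric.eventually_nhds_iff.mp hqmax
  set s := min (δ/2) (η/4) with hs
  have hspos : 0 < s := by positivity
  have h1 : q s ≤ q 0 := by
    apply hsmall; simp [hs, abs_of_pos hspos]
    rw [abs_of_pos hspos]; exact lt_of_le_of_lt (min_le_left _ _) (by linarith)
  have h2 : q 0 < q s := by
    apply hqmono (by constructor <;> [norm_num; linarith]) ⟨le_of_lt hspos, by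
      calc s ≤ η/4 := min_le_right _ _
      _ ≤ η/2 := by linarith⟩ hspos
  linarith

lemma lap_nonpos_of_isLocalMax {f : Euc N → ℝ} (hf : ContDiff ℝ 2 f) {x₀ : Euc N}
    (hmax : IsLocalMax f x₀) : lap f x₀ ≤ 0 :=
  Finset.sum_nonpos fun i _ => secondDeriv_nonpos_of_isLocalMax hf hmax _

lemma fderiv_apply_eq {f : Euc N → ℝ} {x : Euc N} {f' : Euc N →L[ℝ] ℝ}
    (h : HasFDerivAt f f' x) (w : Euc N) : fderiv ℝ f x w = f' w := by rw [h.fderiv]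

/-- lap of a linear combination. -/
lemma lap_comb {f g : Euc N → ℝ} (hf : ContDiff ℝ 2 f) (hg : ContDiff ℝ 2 g)
    (a b c : ℝ) (x : Euc N) :
    lap (fun y => a + b * f y + c * g y) x = b * lap f x + c * lap g x := by
  have hfd : Differentiable ℝ f := hf.differentiable (by norm_num)
  have hgd : Differentiable ℝ g := hg.differentiable (by norm_num)
  have key : ∀ w : Euc N,
      fderiv ℝ (fun y => fderiv ℝ (fun z => a + b * f z + c * g z) y w) x w
        = b * fderiv ℝ (fun y => fderiv ℝ f y w) x w
          + c * fderiv ℝ (fun y => fderiv ℝ g y w) x w := by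
    intro w
    have h1 : ∀ y : Euc N, fderiv ℝ (fun z => a + b * f z + c * g z) y w
        = b * fderiv ℝ f y w + c * fderiv ℝ g y w := by
      intro y
      have hF : HasFDerivAt (fun z => a + b * f z + c * g z)
          ((b • fderiv ℝ f y + c • fderiv ℝ g y)) y := by
        have := (((hfd y).hasFDerivAt.const_mul b).const_add a).add
          ((hgd y).hasFDerivAt.const_mul c)
        exact this
      rw [hF.fderiv]; simp
    have h2 : (fun y : Euc N => fderiv ℝ (fun z => a + b * f z + c * g z) y w)
        = fun y => b * fderiv ℝ f y w + c * fderiv ℝ g y w := funext h1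
    rw [h2]
    have hfw : DifferentiableAt ℝ (fun y : Euc N => fderiv ℝ f y w) x :=
      ((contDiff_fderiv_apply hf w).differentiable (by norm_num)) x
    have hgw : DifferentiableAt ℝ (fun y : Euc N => fderiv ℝ g y w) x :=
      ((contDiff_fderiv_apply hg w).differentiable (by norm_num)) x
    have hG : HasFDerivAt (fun y => b * fderiv ℝ f y w + c * fderiv ℝ g y w)
        (b • fderiv ℝ (fun y => fderiv ℝ f y w) x
          + c • fderiv ℝ (fun y => fderiv ℝ g y w) x) x :=
      (hfw.hasFDerivAt.const_mul b).add (hgw.hasFDerivAt.const_mul c)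
    rw [hG.fderiv]; simp
  unfold lap
  simp only [key, Finset.sum_add_distrib, Finset.mul_sum]

/-- lap of an exponential of an affine function of `⟪·,e⟫`. -/
lemma exp_inner_hasFDerivAt (e : Euc N) (α β : ℝ) (y : Euc N) :
    HasFDerivAt (fun z : Euc N => Real.exp (α * (inner ℝ z e : ℝ) + β))
      ((Real.exp (α * (inner ℝ y e : ℝ) + β) * α) • (innerSL ℝ e : Euc N →L[ℝ] ℝ)) y := by
  have hL : ∀ z : Euc N, (inner ℝ z e : ℝ) = (innerSL ℝ e : Euc N →L[ℝ] ℝ) z := by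
    intro z; simp [real_inner_comm, mul_comm]
  have h1 : HasFDerivAt (fun z : Euc N => α * (inner ℝ z e : ℝ) + β)
      (α • (innerSL ℝ e : Euc N →L[ℝ] ℝ)) y := by
    simp only [hL]
    exact ((innerSL ℝ e : Euc N →L[ℝ] ℝ).hasFDerivAt.const_mul α).add_const β
  have := h1.exp
  simpa [smul_smul] using this

lemma contDiff_exp_inner (e : Euc N) (α β : ℝ) :
    ContDiff ℝ 2 (fun z : Euc N => Real.exp (α * (inner ℝ z e : ℝ) + β)) := by
  apply (Real.contDiff_exp.of_le le_top).comp
  have hL : ContDiff ℝ 2 (fun z : Euc N => (inner ℝ z e : ℝ)) := by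
    have : (fun z : Euc N => (inner ℝ z e : ℝ)) = fun z => (innerSL ℝ e : Euc N →L[ℝ] ℝ) z := by
      funext z; simp [real_inner_comm, mul_comm]
    rw [this]; exact (innerSL ℝ e : Euc N →L[ℝ] ℝ).contDiff
  exact (contDiff_const.mul hL).add contDiff_const

lemma sum_coord_sq (e : Euc N) : ∑ i : Fin N, (e i)^2 = ‖e‖^2 := by
  have h := EuclideanSpace.norm_eq e
  have h2 : ∑ i : Fin N, ‖e i‖^2 = ∑ i : Fin N, (e i)^2 := by
    apply Finset.sum_congr rfl; intro i _; rw [Real.norm_eq_abs, sq_abs]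
  rw [← h2, h, Real.sq_sqrt]
  positivity

lemma lap_exp_inner (e : Euc N) (he : ‖e‖ = 1) (α β : ℝ) (x : Euc N) :
    lap (fun y : Euc N => Real.exp (α * (inner ℝ y e : ℝ) + β)) x
      = α^2 * Real.exp (α * (inner ℝ x e : ℝ) + β) := by
  set F : Euc N → ℝ := fun y => Real.exp (α * (inner ℝ y e : ℝ) + β) with hF
  have key : ∀ w : Euc N,
      fderiv ℝ (fun y => fderiv ℝ F y w) x w = α^2 * ((inner ℝ e w : ℝ))^2 * F x := by
    intro w
    have h1 : ∀ y, fderiv ℝ F y w = (α * (inner ℝ e w : ℝ)) * F y := by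
      intro y
      rw [(exp_inner_hasFDerivAt e α β y).fderiv]
      simp [hF]; ring
    have h2 : (fun y : Euc N => fderiv ℝ F y w) = fun y => (α * (inner ℝ e w : ℝ)) * F y :=
      funext h1
    rw [h2]
    have hG : HasFDerivAt (fun y => (α * (inner ℝ e w : ℝ)) * F y)
        ((α * (inner ℝ e w : ℝ)) • ((F x * α) • (innerSL ℝ e : Euc N →L[ℝ] ℝ))) x :=
      (exp_inner_hasFDerivAt e α β x).const_mul _
    rw [hG.fderiv]
    simp [hF]; ring
  unfold lap
  simp only [key]
  have hcoord : ∀ i : Fin N, (inner ℝ e (EuclideanSpace.single i (1:ℝ)) : ℝ) = e i := by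
    intro i
    rw [real_inner_comm]
    simp [EuclideanSpace.inner_single_left]
  simp only [hcoord]
  rw [← Finset.sum_mul, ← Finset.mul_sum]
  rw [sum_coord_sq, he]
  ring

lemma normsq_hasFDerivAt (y : Euc N) :
    HasFDerivAt (fun z : Euc N => (inner ℝ z z : ℝ))
      ((2:ℝ) • (innerSL ℝ y : Euc N →L[ℝ] ℝ)) y := by
  have := (hasFDerivAt_id y).inner ℝ (hasFDerivAt_id y)
  apply this.congr_fderiv
  ext w
  simp [real_inner_comm, two_mul, mul_comm]

lemma contDiff_normsq : ContDiff ℝ 2 (fun z : Euc N => (inner ℝ z z : ℝ)) :=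
  contDiff_id.inner ℝ contDiff_id

lemma lap_normsq (x : Euc N) :
    lap (fun y : Euc N => (inner ℝ y y : ℝ)) x = 2 * N := by
  have key : ∀ w : Euc N,
      fderiv ℝ (fun y : Euc N => fderiv ℝ (fun z : Euc N => (inner ℝ z z : ℝ)) y w) x w
        = 2 * (inner ℝ w w : ℝ) := by
    intro w
    have h1 : ∀ y : Euc N, fderiv ℝ (fun z : Euc N => (inner ℝ z z : ℝ)) y w
        = 2 * (inner ℝ y w : ℝ) := by
      intro y
      rw [(normsq_hasFDerivAt y).fderiv]
      simp [real_inner_comm]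
    have h2 : (fun y : Euc N => fderiv ℝ (fun z : Euc N => (inner ℝ z z : ℝ)) y w)
        = fun y => 2 * (inner ℝ y w : ℝ) := funext h1
    rw [h2]
    have hG : HasFDerivAt (fun y : Euc N => 2 * (inner ℝ y w : ℝ))
        ((2:ℝ) • (innerSL ℝ w : Euc N →L[ℝ] ℝ)) x := by
      have hL : ∀ z : Euc N, (inner ℝ z w : ℝ) = (innerSL ℝ w : Euc N →L[ℝ] ℝ) z := by
        intro z; simp [real_inner_comm, mul_comm]
      simp only [hL]
      exact ((innerSL ℝ w : Euc N →L[ℝ] ℝ).hasFDerivAt.const_mul 2).congr_fderiv (by ext z; simp)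
    rw [hG.fderiv]
    simp [real_inner_comm]
  unfold lap
  simp only [key]
  have : ∀ i : Fin N, (inner ℝ (EuclideanSpace.single i (1:ℝ)) (EuclideanSpace.single i (1:ℝ)) : ℝ) = 1 := by
    intro i
    rw [real_inner_self_eq_norm_sq, EuclideanSpace.norm_single]
    norm_num
  simp [this]
  ring

/-- If `f` has a maximum at the right end (or interior) of `[a,b]` and is differentiable
there, then `deriv f ≥ 0`. -/
lemma deriv_nonneg_of_max_right {f : ℝ → ℝ} {a b t₀ : ℝ} (hab : a < t₀) (ht₀ : t₀ ≤ b)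
    (hd : DifferentiableAt ℝ f t₀) (hmax : ∀ τ ∈ Icc a b, f τ ≤ f t₀) :
    0 ≤ deriv f t₀ := by
  have hder : HasDerivAt f (deriv f t₀) t₀ := hd.hasDerivAt
  rw [hasDerivAt_iff_tendsto_slope] at hder
  have hmono : 𝓝[<] t₀ ≤ 𝓝[≠] t₀ := nhdsWithin_mono _ fun x hx => ne_of_lt hx
  have hder' : Tendsto (slope f t₀) (𝓝[<] t₀) (𝓝 (deriv f t₀)) := hder.mono_left hmono
  have hev : ∀ᶠ τ in 𝓝[<] t₀, 0 ≤ slope f t₀ τ := by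
    filter_upwards [Ioo_mem_nhdsLT_of_mem (Set.mem_Ioc.mpr ⟨hab, le_refl _⟩)] with τ hτ
    rw [slope_def_field]
    have h1 : f τ ≤ f t₀ := hmax τ ⟨le_of_lt hτ.1, le_trans (le_of_lt hτ.2) ht₀⟩
    have h2 : τ - t₀ < 0 := by linarith [hτ.2]
    rw [div_nonneg_iff]
    exact Or.inr ⟨by linarith, le_of_lt h2⟩
  exact ge_of_tendsto hder' hev

/-- Parabolic comparison principle on the whole space, for bounded-above subsolutions of
`∂ₜ w ≤ d Δw + r w`. -/
lemma parabolic_comparison {d r : ℝ} (hd : 0 < d) (hr : 0 ≤ r) (w : ℝ → Euc N → ℝ)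
    (hc : ContinuousOn (fun p : ℝ × Euc N => w p.1 p.2) (Ici 0 ×ˢ univ))
    (hts : ∀ x : Euc N, ∀ t : ℝ, 0 < t → DifferentiableAt ℝ (fun τ => w τ x) t)
    (hxs : ∀ t : ℝ, 0 < t → ContDiff ℝ 2 (w t))
    (M : ℝ) (hbd : ∀ t : ℝ, 0 ≤ t → ∀ x : Euc N, w t x ≤ M)
    (hineq : ∀ t : ℝ, 0 < t → ∀ x : Euc N,
      deriv (fun τ => w τ x) t ≤ d * lap (w t) x + r * w t x)
    (hinit : ∀ x : Euc N, w 0 x ≤ 0) :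
    ∀ t : ℝ, 0 ≤ t → ∀ x : Euc N, w t x ≤ 0 := by
  intro T hT x
  rcases eq_or_lt_of_le hT with h0 | hTpos
  · rw [← h0]; exact hinit x
  -- replace M by max M 0
  set M' := max M 0 with hM'
  have hbd' : ∀ t : ℝ, 0 ≤ t → ∀ y : Euc N, w t y ≤ M' := fun t ht y =>
    le_trans (hbd t ht y) (le_max_left _ _)
  have hM'0 : 0 ≤ M' := le_max_right _ _
  set a : ℝ := r + 1 with ha
  set K : ℝ := 2 * d * N with hK
  have hK0 : 0 ≤ K := by positivity
  -- main claim: for every δ > 0 the barrier dominates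
  have main : ∀ δ : ℝ, 0 < δ → ∀ t ∈ Icc 0 T, ∀ y : Euc N,
      Real.exp (-(a*t)) * w t y ≤ δ * Real.exp (K*t) * (1 + (inner ℝ y y : ℝ)) := by
    intro δ hδ
    by_contra hcon
    push_neg at hcon
    obtain ⟨t₁, ht₁, x₁, hx₁⟩ := hcon
    set z : ℝ → Euc N → ℝ := fun t y =>
      Real.exp (-(a*t)) * w t y - δ * Real.exp (K*t) * (1 + (inner ℝ y y : ℝ)) with hz
    have hz₁ : 0 < z t₁ x₁ := by simp only [hz]; linarith
    -- z ≤ M' - δ(1+|y|²) for t ∈ [0,T]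
    have hzbd : ∀ t ∈ Icc 0 T, ∀ y : Euc N, z t y ≤ M' - δ * (1 + (inner ℝ y y : ℝ)) := by
      intro t ht y
      have h1 : Real.exp (-(a*t)) * w t y ≤ M' := by
        rcases le_or_gt (w t y) 0 with h | h
        · have : Real.exp (-(a*t)) * w t y ≤ 0 :=
            mul_nonpos_of_nonneg_of_nonpos (Real.exp_nonneg _) h
          linarith
        · have he1 : Real.exp (-(a*t)) ≤ 1 := Real.exp_le_one_iff.mpr (by
            have : 0 ≤ a * t := mul_nonneg (by simp [ha]; linarith) ht.1
            linarith)
          calc Real.exp (-(a*t)) * w t y ≤ 1 * w t y := by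
                apply mul_le_mul_of_nonneg_right he1 (le_of_lt h)
          _ = w t y := one_mul _
          _ ≤ M' := hbd' t ht.1 y
      have h2 : 1 ≤ Real.exp (K*t) := Real.one_le_exp_iff.mpr <| mul_nonneg hK0 ht.1
      have h3 : 0 ≤ 1 + (inner ℝ y y : ℝ) := by
        have := real_inner_self_nonneg (x := y); linarith
      have h4 : δ * (1 + (inner ℝ y y : ℝ)) ≤ δ * Real.exp (K*t) * (1 + (inner ℝ y y : ℝ)) := by
        have := mul_le_mul_of_nonneg_right
          (mul_le_mul_of_nonneg_left h2 (le_of_lt hδ)) h3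
        simpa [mul_one] using this
      simp only [hz]
      linarith
    -- the norm bound on any positivity point
    have hnormbd : ∀ t ∈ Icc 0 T, ∀ y : Euc N, 0 < z t y →
        ‖y‖ ≤ Real.sqrt (M'/δ) := by
      intro t ht y hy
      have := hzbd t ht y
      have h5 : δ * (1 + (inner ℝ y y : ℝ)) < M' := by linarith
      have h6 : (inner ℝ y y : ℝ) < M'/δ := by
        rw [lt_div_iff₀ hδ]; nlinarith
      have h7 : ‖y‖^2 < M'/δ := by rwa [real_inner_self_eq_norm_sq] at h6
      calc ‖y‖ = Real.sqrt (‖y‖^2) := by rw [Real.sqrt_sq (norm_nonneg _)]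
      _ ≤ Real.sqrt (M'/δ) := Real.sqrt_le_sqrt (le_of_lt h7)
    set ρ : ℝ := Real.sqrt (M'/δ) + 1 with hρ
    have hρ0 : 0 ≤ ρ := by positivity
    -- compact set
    set C : Set (ℝ × Euc N) := Icc 0 T ×ˢ closedBall (0:Euc N) ρ with hC
    have hCcomp : IsCompact C := (isCompact_Icc).prod (isCompact_closedBall _ _)
    have hmem₁ : (t₁, x₁) ∈ C := ⟨ht₁, by
      simp only [mem_closedBall, dist_zero_right]
      rw [hρ]
      linarith [hnormbd t₁ ht₁ x₁ hz₁]⟩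
    have hCne : C.Nonempty := ⟨(t₁, x₁), hmem₁⟩
    have hzcont : ContinuousOn (fun p : ℝ × Euc N => z p.1 p.2) C := by
      apply ContinuousOn.sub
      · apply ContinuousOn.mul
        · apply Continuous.continuousOn; fun_prop
        · apply hc.mono
          intro p hp
          exact ⟨hp.1.1, trivial⟩
      · apply Continuous.continuousOn
        apply Continuous.mul
        · fun_prop
        · exact continuous_const.add (continuous_snd.inner continuous_snd)
    obtain ⟨⟨t₀, x₀⟩, hmem, hmax⟩ := hCcomp.exists_isMaxOn hCne hzcont
    have hzmax : ∀ p ∈ C, z p.1 p.2 ≤ z t₀ x₀ := fun p hp => hmax hp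
    have hz₀ : 0 < z t₀ x₀ := lt_of_lt_of_le hz₁ (hzmax (t₁, x₁) hmem₁)
    -- x₀ is interior
    have hx₀lt : ‖x₀‖ < ρ := by
      have := hnormbd t₀ hmem.1 x₀ hz₀
      rw [hρ]; linarith
    -- t₀ > 0
    have ht₀pos : 0 < t₀ := by
      have ht01 : (0:ℝ) ≤ t₀ := hmem.1.1
      rcases eq_or_lt_of_le ht01 with h | h
      · exfalso
        have hz0 : z 0 x₀ ≤ -δ := by
          simp only [hz, mul_zero, neg_zero, Real.exp_zero, one_mul]
          have h1 := hinit x₀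
          have h2 := real_inner_self_nonneg (x := x₀)
          nlinarith
        rw [← h] at hz₀
        linarith
      · exact h
    -- notation
    set E1 : ℝ := Real.exp (-(a*t₀)) with hE1
    set E2 : ℝ := Real.exp (K*t₀) with hE2
    set P₀ : ℝ := 1 + (inner ℝ x₀ x₀ : ℝ) with hP₀def
    set w₀ : ℝ := w t₀ x₀ with hw₀
    set L : ℝ := lap (w t₀) x₀ with hL
    set W' : ℝ := deriv (fun τ => w τ x₀) t₀ with hW'
    have hE1pos : 0 < E1 := Real.exp_pos _
    have hE2pos : 0 < E2 := Real.exp_pos _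
    have hP₀ : 1 ≤ P₀ := by
      have := real_inner_self_nonneg (x := x₀); simp only [hP₀def]; linarith
    -- time derivative of z at (t₀, x₀) is nonneg
    have hW : HasDerivAt (fun τ => w τ x₀) W' t₀ := (hts x₀ t₀ ht₀pos).hasDerivAt
    have hexp1 : HasDerivAt (fun τ : ℝ => Real.exp (-(a*τ))) (E1 * (-a)) t₀ := by
      have h1 : HasDerivAt (fun τ : ℝ => -(a*τ)) (-a) t₀ := by
        simpa using ((hasDerivAt_id t₀).const_mul (-a))
      simpa [hE1, mul_comm] using h1.exp
    have hexp2 : HasDerivAt (fun τ : ℝ => δ * Real.exp (K*τ) * P₀)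
        (δ * (E2 * K) * P₀) t₀ := by
      have h1 : HasDerivAt (fun τ : ℝ => K*τ) K t₀ := by
        simpa using ((hasDerivAt_id t₀).const_mul K)
      exact ((h1.exp.const_mul δ).mul_const P₀)
    have hφ : HasDerivAt (fun τ => z τ x₀)
        ((E1 * (-a)) * w₀ + E1 * W' - δ * (E2 * K) * P₀) t₀ := by
      have := (hexp1.mul hW).sub hexp2
      exact this
    have hderiv_nonneg : 0 ≤ (E1 * (-a)) * w₀ + E1 * W' - δ * (E2 * K) * P₀ := by
      rw [← hφ.deriv]
      apply deriv_nonneg_of_max_right ht₀pos hmem.1.2 hφ.differentiableAt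
      intro τ hτ
      exact hzmax (τ, x₀) ⟨hτ, hmem.2⟩
    -- spatial: laplacian at the max is nonpos
    set b : ℝ := E1 with hb
    set c' : ℝ := -(δ * E2) with hc'
    set ζ : Euc N → ℝ := fun y => c' + b * w t₀ y + c' * (inner ℝ y y : ℝ) with hζ
    have hζeq : ∀ y, ζ y = z t₀ y := by
      intro y; simp only [hζ, hz, hb, hc', hE1, hE2]; ring
    have hζc : ContDiff ℝ 2 ζ :=
      (contDiff_const.add (contDiff_const.mul (hxs t₀ ht₀pos))).add
        (contDiff_const.mul contDiff_normsq)
    have hζmax : IsLocalMax ζ x₀ := by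
      have hball : Metric.ball x₀ (ρ - ‖x₀‖) ∈ 𝓝 x₀ :=
        Metric.ball_mem_nhds _ (by linarith)
      filter_upwards [hball] with y hy
      have hynorm : ‖y‖ ≤ ρ := by
        have h1 : dist y x₀ < ρ - ‖x₀‖ := hy
        have h2 : ‖y - x₀‖ < ρ - ‖x₀‖ := by rwa [← dist_eq_norm]
        calc ‖y‖ = ‖y - x₀ + x₀‖ := by rw [sub_add_cancel]
        _ ≤ ‖y - x₀‖ + ‖x₀‖ := norm_add_le _ _
        _ ≤ ρ := by linarith
      rw [hζeq y, hζeq x₀]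
      exact hzmax (t₀, y) ⟨hmem.1, by rw [mem_closedBall, dist_zero_right]; exact hynorm⟩
    have hlap : lap ζ x₀ ≤ 0 := lap_nonpos_of_isLocalMax hζc hζmax
    have hlapval : lap ζ x₀ = b * L + c' * (2 * N) := by
      have := lap_comb (hxs t₀ ht₀pos) contDiff_normsq c' b c' x₀
      rw [hζ, this, lap_normsq]
    have hlap2 : E1 * L ≤ δ * E2 * (2 * N) := by
      rw [hlapval] at hlap; simp only [hb, hc'] at hlap; linarith
    -- the PDE inequality
    have hpde : W' ≤ d * L + r * w₀ := hineq t₀ ht₀pos x₀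
    -- positivity of z at the max
    have hzval : 0 < E1 * w₀ - δ * E2 * P₀ := by
      have : z t₀ x₀ = E1 * w₀ - δ * E2 * P₀ := by
        simp only [hz, hE1, hE2, hP₀def, hw₀]; try ring
      linarith [hz₀, this.symm.le, this.le]
    -- combine
    have hKval : K = 2 * d * N := hK
    have haval : a = r + 1 := ha
    have step1 : E1 * W' ≤ E1 * (d * L + r * w₀) :=
      mul_le_mul_of_nonneg_left hpde (le_of_lt hE1pos)
    have step2 : d * (E1 * L) ≤ d * (δ * E2 * (2 * N)) :=
      mul_le_mul_of_nonneg_left hlap2 (le_of_lt hd)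
    have step3 : δ * E2 * 1 ≤ δ * E2 * P₀ :=
      mul_le_mul_of_nonneg_left hP₀ (by positivity)
    have step4 : δ * (E2 * K) * 1 ≤ δ * (E2 * K) * P₀ :=
      mul_le_mul_of_nonneg_left hP₀ (by positivity)
    have e1 : E1 * W' ≤ d * (E1 * L) + r * (E1 * w₀) := by
      calc E1 * W' ≤ E1 * (d * L + r * w₀) := step1
      _ = d * (E1 * L) + r * (E1 * w₀) := by ring
    have e2 : d * (E1 * L) ≤ 2 * d * (N:ℝ) * (δ * E2) := by
      calc d * (E1 * L) ≤ d * (δ * E2 * (2 * N)) := step2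
      _ = 2 * d * (N:ℝ) * (δ * E2) := by ring
    have e3 : δ * E2 ≤ δ * E2 * P₀ := by linarith [step3]
    have e4 : δ * E2 * K ≤ δ * (E2 * K) * P₀ := by
      calc δ * E2 * K = δ * (E2 * K) * 1 := by ring
      _ ≤ δ * (E2 * K) * P₀ := step4
    have e5 : (E1 * (-a)) * w₀ = -(r+1) * (E1 * w₀) := by rw [haval]; ring
    have e6 : δ * E2 * K = 2 * d * (N:ℝ) * (δ * E2) := by rw [hKval]; ring
    have e7 : 0 < δ * E2 := mul_pos hδ hE2pos
    linarith [hderiv_nonneg, e1, e2, e3, e4, e5, e6, e7, hzval]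
  -- conclude from main
  have hpos : 0 < Real.exp (-(a*T)) := Real.exp_pos _
  have hfin : ∀ ε : ℝ, 0 < ε → w T x ≤ ε := by
    intro ε hε
    set P : ℝ := 1 + (inner ℝ x x : ℝ) with hP
    have hP0 : 0 < P := by
      have := real_inner_self_nonneg (x := x); simp only [hP]; linarith
    set Cx : ℝ := Real.exp (a*T) * (Real.exp (K*T) * P) with hCx
    have hCx0 : 0 < Cx := by positivity
    have := main (ε / Cx) (by positivity) T ⟨hT, le_refl _⟩ x
    have h2 : w T x ≤ Real.exp (a*T) * (ε / Cx * Real.exp (K*T) * P) := by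
      have h3 := mul_le_mul_of_nonneg_left this (le_of_lt (Real.exp_pos (a*T)))
      calc w T x = Real.exp (a*T) * (Real.exp (-(a*T)) * w T x) := by
            rw [← mul_assoc, ← Real.exp_add]; simp
      _ ≤ _ := h3
    calc w T x ≤ Real.exp (a*T) * (ε / Cx * Real.exp (K*T) * P) := h2
    _ = ε := by
      rw [hCx]
      have h4 : Real.exp (a*T) ≠ 0 := ne_of_gt (Real.exp_pos _)
      have h5 : Real.exp (K*T) ≠ 0 := ne_of_gt (Real.exp_pos _)
      field_simp
  by_contra hcon
  push_neg at hcon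
  linarith [hfin (w T x / 2) (by linarith)]


-- continuity of the exponential supersolution in (t,x)
lemma cont_psi (e : Euc N) (α c₁ β B : ℝ) :
    Continuous (fun p : ℝ × Euc N =>
      B * Real.exp (α * (inner ℝ p.2 e : ℝ) + (c₁ * p.1 + β))) := by
  apply continuous_const.mul
  apply Real.continuous_exp.comp
  exact (continuous_const.mul (continuous_snd.inner continuous_const)).add
    ((continuous_const.mul continuous_fst).add continuous_const)

-- time derivative of the supersolution
lemma psi_hasDerivAt (e x : Euc N) (α γ β B : ℝ) (t : ℝ) :
    HasDerivAt (fun τ : ℝ => B * Real.exp (α * (inner ℝ x e : ℝ) + (γ * τ + β)))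
      (γ * (B * Real.exp (α * (inner ℝ x e : ℝ) + (γ * t + β)))) t := by
  have h1 : HasDerivAt (fun τ : ℝ => α * (inner ℝ x e : ℝ) + (γ * τ + β)) γ t := by
    simpa using (((hasDerivAt_id t).const_mul γ).add_const β).const_add (α * (inner ℝ x e : ℝ))
  simpa [mul_comm, mul_assoc, mul_left_comm] using (h1.exp.const_mul B)

/-- supersolution bound for `u`. -/
lemma u_supersol {d₁ d₂ r₁ r₂ a₁ a₂ : ℝ} (hd₁ : 0 < d₁) (hr₁ : 0 < r₁) (ha₁ : 0 < a₁)
    {u v : ℝ → Euc N → ℝ} (hsol : IsLVSolution d₁ d₂ r₁ r₂ a₁ a₂ u v)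
    (hrange : ∀ t : ℝ, 0 ≤ t → ∀ x : Euc N, u t x ∈ Icc (0:ℝ) 1 ∧ v t x ∈ Icc (0:ℝ) 1)
    (u₀ : Euc N → ℝ) (hu0 : ∀ x, u 0 x = u₀ x) (hu₀le : ∀ x, u₀ x ≤ 1)
    (lam c₁ R₀ : ℝ) (hlam : 0 < lam) (hlc : lam * c₁ = d₁ * lam ^ 2 + r₁)
    (h₀ : ∀ x : Euc N, u₀ x = 0 ∨ ‖x‖ ≤ R₀)
    (e : Euc N) (he : ‖e‖ = 1) :
    ∀ t : ℝ, 0 ≤ t → ∀ x : Euc N,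
      u t x ≤ Real.exp ((-lam) * (inner ℝ x e : ℝ) + (lam * c₁ * t + lam * R₀)) := by
  set ψ : ℝ → Euc N → ℝ := fun t x =>
    Real.exp ((-lam) * (inner ℝ x e : ℝ) + (lam * c₁ * t + lam * R₀)) with hψ
  set w : ℝ → Euc N → ℝ := fun t x => u t x - ψ t x with hw
  have key := parabolic_comparison (d := d₁) (r := r₁) hd₁ (le_of_lt hr₁) w
    ?_ ?_ ?_ 1 ?_ ?_ ?_
  · intro t ht x
    have := key t ht x
    simp only [hw] at this
    linarith
  · -- continuity
    apply ContinuousOn.sub hsol.contu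
    have := cont_psi e (-lam) (lam * c₁) (lam * R₀) 1
    simp only [one_mul] at this
    exact this.continuousOn
  · -- time differentiability
    intro x t ht
    apply DifferentiableAt.sub
    · exact ((hsol.smooth_t x).1.differentiableOn (by norm_num)).differentiableAt
        (isOpen_Ioi.mem_nhds ht)
    · have := psi_hasDerivAt e x (-lam) (lam * c₁) (lam * R₀) 1 t
      simp only [one_mul] at this
      exact this.differentiableAt
  · -- space smoothness
    intro t ht
    exact ((hsol.smooth_x t ht).1).sub (contDiff_exp_inner e (-lam) (lam * c₁ * t + lam * R₀))
  · -- bounded above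
    intro t ht x
    have h1 := (hrange t ht x).1.2
    have h2 : 0 ≤ ψ t x := le_of_lt (Real.exp_pos _)
    simp only [hw]; linarith
  · -- differential inequality
    intro t ht x
    -- deriv of w in t
    have hu_diff : DifferentiableAt ℝ (fun τ => u τ x) t :=
      ((hsol.smooth_t x).1.differentiableOn (by norm_num)).differentiableAt
        (isOpen_Ioi.mem_nhds ht)
    have hψt := psi_hasDerivAt e x (-lam) (lam * c₁) (lam * R₀) 1 t
    simp only [one_mul] at hψt
    have hderiv : deriv (fun τ => w τ x) t
        = deriv (fun τ => u τ x) t - lam * c₁ * ψ t x := by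
      have := (hu_diff.hasDerivAt.sub hψt).deriv
      exact this
    -- lap of w
    have hlapw : lap (w t) x = lap (u t) x - lam^2 * ψ t x := by
      have hfe : (w t) = fun y => (0:ℝ) + 1 * u t y + (-1) *
          Real.exp ((-lam) * (inner ℝ y e : ℝ) + (lam * c₁ * t + lam * R₀)) := by
        funext y; simp only [hw, hψ]; ring
      rw [hfe, lap_comb (hsol.smooth_x t ht).1
        (contDiff_exp_inner e (-lam) (lam * c₁ * t + lam * R₀)) 0 1 (-1) x,
        lap_exp_inner e he (-lam) (lam * c₁ * t + lam * R₀) x]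
      simp only [hψ]; ring
    rw [hderiv, hlapw, hsol.eqn_u t ht x]
    have hψpos : 0 < ψ t x := Real.exp_pos _
    have hu01 := (hrange t (le_of_lt ht) x).1
    have hv01 := (hrange t (le_of_lt ht) x).2
    have hquad : r₁ * u t x * (1 - u t x - a₁ * v t x) ≤ r₁ * u t x := by
      nlinarith [mul_nonneg (mul_nonneg hr₁.le hu01.1) hu01.1,
        mul_nonneg (mul_nonneg (mul_nonneg hr₁.le ha₁.le) hu01.1) hv01.1]
    have hcoeff : lam * c₁ * ψ t x = d₁ * (lam^2 * ψ t x) + r₁ * ψ t x := by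
      linear_combination (ψ t x) * hlc
    simp only [hw, hψ] at *
    linarith [hquad, hcoeff]
  · -- initial condition
    intro x
    simp only [hw, hu0]
    rcases h₀ x with h | h
    · have hψ0 : 0 < ψ 0 x := Real.exp_pos _
      simp only [hψ] at hψ0
      rw [h]; linarith
    · have h1 : (inner ℝ x e : ℝ) ≤ R₀ := by
        calc (inner ℝ x e : ℝ) ≤ ‖x‖ * ‖e‖ := real_inner_le_norm x e
        _ = ‖x‖ := by rw [he, mul_one]
        _ ≤ R₀ := h
      have h2 : (1:ℝ) ≤ ψ 0 x := by
        rw [hψ]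
        simp only [mul_zero, zero_add]
        rw [show (1:ℝ) = Real.exp 0 by simp]
        apply Real.exp_le_exp.mpr
        have := mul_le_mul_of_nonneg_left h1 (le_of_lt hlam)
        nlinarith
      have := hu₀le x
      simp only [hψ] at h2 ⊢
      linarith

/-- supersolution bound for `1 - v`. -/
lemma v_supersol {d₁ d₂ r₁ r₂ a₁ a₂ : ℝ} (hd₂ : 0 < d₂) (hr₂ : 0 < r₂) (ha₂ : 0 < a₂)
    {u v : ℝ → Euc N → ℝ} (hsol : IsLVSolution d₁ d₂ r₁ r₂ a₁ a₂ u v)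
    (hrange : ∀ t : ℝ, 0 ≤ t → ∀ x : Euc N, u t x ∈ Icc (0:ℝ) 1 ∧ v t x ∈ Icc (0:ℝ) 1)
    (v₀ : Euc N → ℝ) (hv0 : ∀ x, v 0 x = v₀ x) (hv₀ : ∀ x, 0 ≤ v₀ x)
    (lam c₁ R₀ mu B : ℝ) (hlam : 0 < lam) (hmu : 0 < mu) (hmule : mu ≤ lam)
    (hκ : 0 < mu * c₁ - d₂ * mu^2) (hB : 1 ≤ B)
    (hBκ : r₂ * a₂ ≤ (mu * c₁ - d₂ * mu^2) * B)
    (hR₀ : 0 ≤ R₀)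
    (h₁ : ∀ x : Euc N, v₀ x = 1 ∨ ‖x‖ ≤ R₀)
    (e : Euc N) (he : ‖e‖ = 1)
    (hub : ∀ t : ℝ, 0 ≤ t → ∀ x : Euc N,
      u t x ≤ Real.exp ((-lam) * (inner ℝ x e : ℝ) + (lam * c₁ * t + lam * R₀))) :
    ∀ t : ℝ, 0 ≤ t → ∀ x : Euc N,
      1 - v t x ≤ B * Real.exp ((-mu) * (inner ℝ x e : ℝ) + (mu * c₁ * t + mu * R₀)) := by
  have hB0 : 0 < B := lt_of_lt_of_le one_pos hB
  set ψ : ℝ → Euc N → ℝ := fun t x =>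
    B * Real.exp ((-mu) * (inner ℝ x e : ℝ) + (mu * c₁ * t + mu * R₀)) with hψ
  set w : ℝ → Euc N → ℝ := fun t x => (1 - v t x) - ψ t x with hw
  have key := parabolic_comparison (d := d₂) (r := 0) hd₂ (le_refl 0) w
    ?_ ?_ ?_ 1 ?_ ?_ ?_
  · intro t ht x
    have := key t ht x
    simp only [hw, hψ] at this
    linarith
  · -- continuity
    apply ContinuousOn.sub
    · exact (continuousOn_const).sub hsol.contv
    · exact (cont_psi e (-mu) (mu * c₁) (mu * R₀) B).continuousOn
  · -- time differentiability
    intro x t ht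
    apply DifferentiableAt.sub
    · apply DifferentiableAt.const_sub
      exact ((hsol.smooth_t x).2.differentiableOn (by norm_num)).differentiableAt
        (isOpen_Ioi.mem_nhds ht)
    · exact (psi_hasDerivAt e x (-mu) (mu * c₁) (mu * R₀) B t).differentiableAt
  · -- space smoothness
    intro t ht
    exact (contDiff_const.sub (hsol.smooth_x t ht).2).sub
      (contDiff_const.mul (contDiff_exp_inner e (-mu) (mu * c₁ * t + mu * R₀)))
  · -- bounded above
    intro t ht x
    have h1 := (hrange t ht x).2.1
    have h2 : 0 ≤ ψ t x := le_of_lt (by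
      exact mul_pos hB0 (Real.exp_pos _))
    simp only [hw]; linarith
  · -- differential inequality
    intro t ht x
    have hv_diff : DifferentiableAt ℝ (fun τ => v τ x) t :=
      ((hsol.smooth_t x).2.differentiableOn (by norm_num)).differentiableAt
        (isOpen_Ioi.mem_nhds ht)
    have hψt := psi_hasDerivAt e x (-mu) (mu * c₁) (mu * R₀) B t
    have hderiv : deriv (fun τ => w τ x) t
        = - deriv (fun τ => v τ x) t - mu * c₁ * ψ t x := by
      have := ((hv_diff.hasDerivAt.const_sub 1).sub hψt).deriv
      exact this
    set E : ℝ := Real.exp ((-mu) * (inner ℝ x e : ℝ) + (mu * c₁ * t + mu * R₀)) with hE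
    have hlapw : lap (w t) x = - lap (v t) x - B * (mu^2 * E) := by
      have hfe : (w t) = fun y => (1:ℝ) + (-1) * v t y + (-B) *
          Real.exp ((-mu) * (inner ℝ y e : ℝ) + (mu * c₁ * t + mu * R₀)) := by
        funext y; simp only [hw, hψ]; ring
      rw [hfe, lap_comb (hsol.smooth_x t ht).2
        (contDiff_exp_inner e (-mu) (mu * c₁ * t + mu * R₀)) 1 (-1) (-B) x,
        lap_exp_inner e he (-mu) (mu * c₁ * t + mu * R₀) x]
      simp only [hE]; ring
    rw [hderiv, hlapw, hsol.eqn_v t ht x]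
    -- the source estimate
    set θ : ℝ := c₁ * t + R₀ - (inner ℝ x e : ℝ) with hθ
    have hEθ : (-mu) * (inner ℝ x e : ℝ) + (mu * c₁ * t + mu * R₀) = mu * θ := by
      rw [hθ]; ring
    have hLθ : (-lam) * (inner ℝ x e : ℝ) + (lam * c₁ * t + lam * R₀) = lam * θ := by
      rw [hθ]; ring
    have hu01 := (hrange t (le_of_lt ht) x).1
    have hv01 := (hrange t (le_of_lt ht) x).2
    have huE : u t x ≤ Real.exp (lam * θ) := by
      have := hub t (le_of_lt ht) x
      rwa [hLθ] at this
    have hsource : r₂ * a₂ * u t x ≤ (mu * c₁ - d₂ * mu^2) * B * Real.exp (mu * θ) := by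
      rcases le_or_gt 0 θ with hθ0 | hθ0
      · have hE1 : 1 ≤ Real.exp (mu * θ) :=
          Real.one_le_exp_iff.mpr (mul_nonneg (le_of_lt hmu) hθ0)
        calc r₂ * a₂ * u t x ≤ r₂ * a₂ * 1 := by
              apply mul_le_mul_of_nonneg_left hu01.2 (by positivity)
        _ = r₂ * a₂ := mul_one _
        _ ≤ (mu * c₁ - d₂ * mu^2) * B := hBκ
        _ ≤ (mu * c₁ - d₂ * mu^2) * B * Real.exp (mu * θ) := by
              nlinarith [mul_pos hκ hB0]
      · have hmono : lam * θ ≤ mu * θ := by nlinarith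
        have huE2 : u t x ≤ Real.exp (mu * θ) :=
          le_trans huE (Real.exp_le_exp.mpr hmono)
        calc r₂ * a₂ * u t x ≤ r₂ * a₂ * Real.exp (mu * θ) := by
              apply mul_le_mul_of_nonneg_left huE2 (by positivity)
        _ ≤ (mu * c₁ - d₂ * mu^2) * B * Real.exp (mu * θ) :=
              mul_le_mul_of_nonneg_right hBκ (Real.exp_nonneg _)
    have hquad2 : - (r₂ * v t x * (1 - v t x - a₂ * u t x)) ≤ r₂ * a₂ * u t x := by
      nlinarith [mul_nonneg (mul_nonneg (mul_nonneg hr₂.le ha₂.le) hu01.1)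
          (sub_nonneg.mpr hv01.2),
        mul_nonneg (mul_nonneg hr₂.le hv01.1) (sub_nonneg.mpr hv01.2)]
    have hψE : ψ t x = B * E := rfl
    have hEθ' : E = Real.exp (mu * θ) := by rw [hE, hEθ]
    rw [hψE, hEθ'] at *
    have hcoeff : mu * c₁ * (B * Real.exp (mu * θ))
        = d₂ * (B * (mu^2 * Real.exp (mu * θ)))
          + (mu * c₁ - d₂ * mu^2) * B * Real.exp (mu * θ) := by ring
    simp only [hw] at *
    linarith [hsource, hquad2, hcoeff]
  · -- initial condition
    intro x
    have hψ0 : ψ 0 x = B * Real.exp ((-mu) * (inner ℝ x e : ℝ) + mu * R₀) := by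
      simp only [hψ, mul_zero, zero_add]
    simp only [hw, hv0, hψ0]
    rcases h₁ x with h | h
    · rw [h]
      have : 0 < B * Real.exp ((-mu) * (inner ℝ x e : ℝ) + mu * R₀) := by positivity
      linarith
    · have h1 : (inner ℝ x e : ℝ) ≤ R₀ := by
        calc (inner ℝ x e : ℝ) ≤ ‖x‖ * ‖e‖ := real_inner_le_norm x e
        _ = ‖x‖ := by rw [he, mul_one]
        _ ≤ R₀ := h
      have h2 : (1:ℝ) ≤ Real.exp ((-mu) * (inner ℝ x e : ℝ) + mu * R₀) := by
        apply Real.one_le_exp_iff.mpr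
        nlinarith
      have h3 : (1:ℝ) ≤ B * Real.exp ((-mu) * (inner ℝ x e : ℝ) + mu * R₀) := by
        nlinarith
      have := hv₀ x
      linarith


set_option maxHeartbeats 1000000 in
/-- for every unit `e` and `c > 2√r₁·max(√d₁, √(d₂/2))`,
`sup_{x·e ≥ ct} (u(t,x) + |1 − v(t,x)|) → 0`, and the same holds over `{|x| ≥ ct}`. -/
theorem spreading_upper_bound_halfspace {N : ℕ} (hN : 2 ≤ N) (d₁ d₂ r₁ r₂ a₁ a₂ : ℝ)
    (hp : LVParams d₁ d₂ r₁ r₂ a₁ a₂) (u v : ℝ → Euc N → ℝ)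
    (hsol : IsLVSolution d₁ d₂ r₁ r₂ a₁ a₂ u v)
    (hrange : ∀ t : ℝ, 0 ≤ t → ∀ x : Euc N, u t x ∈ Icc (0:ℝ) 1 ∧ v t x ∈ Icc (0:ℝ) 1)
    (u₀ v₀ : Euc N → ℝ) (hinit : AdmissibleInit u₀ v₀)
    (hu0 : ∀ x, u 0 x = u₀ x) (hv0 : ∀ x, v 0 x = v₀ x) :
    ∀ e : Euc N, ‖e‖ = 1 →
    ∀ c : ℝ, 2 * Real.sqrt r₁ * max (Real.sqrt d₁) (Real.sqrt (d₂ / 2)) < c →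
      (∀ ε > (0:ℝ), ∃ T : ℝ, ∀ t : ℝ, T ≤ t → ∀ x : Euc N, c * t ≤ (inner ℝ x e : ℝ) →
        u t x + |1 - v t x| ≤ ε) ∧
      (∀ ε > (0:ℝ), ∃ T : ℝ, ∀ t : ℝ, T ≤ t → ∀ x : Euc N, c * t ≤ ‖x‖ →
        u t x + |1 - v t x| ≤ ε) := by
  obtain ⟨hd₁, hd₂, hr₁, hr₂, ha₁, ha₁1, ha₂⟩ := hp
  intro e he c hc
  -- parameters
  set lam : ℝ := Real.sqrt (r₁ / d₁) with hlamdef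
  set c₁ : ℝ := 2 * Real.sqrt (d₁ * r₁) with hc₁def
  have hlam : 0 < lam := Real.sqrt_pos.mpr (div_pos hr₁ hd₁)
  have hc₁pos : 0 < c₁ := by
    have : 0 < Real.sqrt (d₁ * r₁) := Real.sqrt_pos.mpr (mul_pos hd₁ hr₁)
    rw [hc₁def]; linarith
  have hlamsq : lam ^ 2 = r₁ / d₁ := Real.sq_sqrt (le_of_lt (div_pos hr₁ hd₁))
  have hsqrtprod : Real.sqrt (r₁ / d₁) * Real.sqrt (d₁ * r₁) = r₁ := by
    rw [← Real.sqrt_mul (by positivity)]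
    rw [show r₁ / d₁ * (d₁ * r₁) = r₁ ^ 2 by field_simp]
    exact Real.sqrt_sq hr₁.le
  have hlc : lam * c₁ = d₁ * lam ^ 2 + r₁ := by
    rw [hlamdef, hc₁def]
    have h9 : Real.sqrt (r₁/d₁) * (2 * Real.sqrt (d₁ * r₁)) = 2 * r₁ := by
      linear_combination 2 * hsqrtprod
    rw [h9, Real.sq_sqrt (le_of_lt (div_pos hr₁ hd₁))]
    field_simp
    ring
  -- c₁ < c
  have hcc : c₁ < c := by
    have h1 : Real.sqrt d₁ ≤ max (Real.sqrt d₁) (Real.sqrt (d₂/2)) := le_max_left _ _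
    have h2 : c₁ = 2 * Real.sqrt r₁ * Real.sqrt d₁ := by
      rw [hc₁def, Real.sqrt_mul hd₁.le]; ring
    have h3 : 2 * Real.sqrt r₁ * Real.sqrt d₁
        ≤ 2 * Real.sqrt r₁ * max (Real.sqrt d₁) (Real.sqrt (d₂/2)) := by
      apply mul_le_mul_of_nonneg_left h1 (by positivity)
    linarith
  have hcpos : 0 < c := by
    have h4 : 0 < Real.sqrt d₁ := Real.sqrt_pos.mpr hd₁
    have h5 : 0 < Real.sqrt r₁ := Real.sqrt_pos.mpr hr₁
    have : (0:ℝ) < 2 * Real.sqrt r₁ * max (Real.sqrt d₁) (Real.sqrt (d₂/2)) := by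
      apply _root_.mul_pos (by positivity : (0:ℝ) < 2 * Real.sqrt r₁)
      exact lt_max_of_lt_left h4
    linarith
  -- mu, κ, B
  set mu : ℝ := min lam (c₁ / (2 * d₂)) with hmudef
  have hmu : 0 < mu := lt_min hlam (by positivity)
  have hmule : mu ≤ lam := min_le_left _ _
  have hκ : 0 < mu * c₁ - d₂ * mu ^ 2 := by
    rcases le_total lam (c₁ / (2 * d₂)) with h | h
    · rw [hmudef, min_eq_left h]
      have h' : lam * (2 * d₂) ≤ c₁ := (le_div_iff₀ (by positivity)).mp h
      nlinarith [mul_le_mul_of_nonneg_left h' hlam.le]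
    · rw [hmudef, min_eq_right h]
      have hk : c₁ / (2*d₂) * c₁ - d₂ * (c₁ / (2*d₂)) ^ 2 = c₁ ^ 2 / (4 * d₂) := by
        field_simp; ring
      rw [hk]; positivity
  set B : ℝ := max 1 (r₂ * a₂ / (mu * c₁ - d₂ * mu ^ 2)) with hBdef
  have hB : 1 ≤ B := le_max_left _ _
  have hBκ : r₂ * a₂ ≤ (mu * c₁ - d₂ * mu ^ 2) * B := by
    have h1 : r₂ * a₂ / (mu * c₁ - d₂ * mu ^ 2) ≤ B := le_max_right _ _
    calc r₂ * a₂ = (mu * c₁ - d₂ * mu ^ 2) * (r₂ * a₂ / (mu * c₁ - d₂ * mu ^ 2)) := by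
          rw [mul_div_assoc', mul_div_cancel_left₀ _ hκ.ne']
    _ ≤ (mu * c₁ - d₂ * mu ^ 2) * B := mul_le_mul_of_nonneg_left h1 hκ.le
  -- R₀
  obtain ⟨hu₀c, hv₀c, hrange₀, hune, K, hKcomp, hKout⟩ := hinit
  obtain ⟨R', hR'⟩ := hKcomp.isBounded.subset_closedBall 0
  set R₀ : ℝ := max R' 0 with hR₀def
  have hR₀ : 0 ≤ R₀ := le_max_right _ _
  have h₀ : ∀ x : Euc N, u₀ x = 0 ∨ ‖x‖ ≤ R₀ := by
    intro x
    by_cases hx : x ∈ K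
    · right
      have := hR' hx
      rw [mem_closedBall, dist_zero_right] at this
      exact le_trans this (le_max_left _ _)
    · exact Or.inl (hKout x hx).1
  have h₁ : ∀ x : Euc N, v₀ x = 1 ∨ ‖x‖ ≤ R₀ := by
    intro x
    by_cases hx : x ∈ K
    · right
      have := hR' hx
      rw [mem_closedBall, dist_zero_right] at this
      exact le_trans this (le_max_left _ _)
    · exact Or.inl (hKout x hx).2
  -- the two supersolution bounds, uniform in the direction
  have hu_bound : ∀ e' : Euc N, ‖e'‖ = 1 → ∀ t : ℝ, 0 ≤ t → ∀ x : Euc N,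
      u t x ≤ Real.exp ((-lam) * (inner ℝ x e' : ℝ) + (lam * c₁ * t + lam * R₀)) :=
    fun e' he' => u_supersol hd₁ hr₁ ha₁ hsol hrange u₀ hu0
      (fun x => (hrange₀ x).1.2) lam c₁ R₀ hlam hlc h₀ e' he'
  have hv_bound : ∀ e' : Euc N, ‖e'‖ = 1 → ∀ t : ℝ, 0 ≤ t → ∀ x : Euc N,
      1 - v t x ≤ B * Real.exp ((-mu) * (inner ℝ x e' : ℝ) + (mu * c₁ * t + mu * R₀)) :=
    fun e' he' => v_supersol hd₂ hr₂ (lt_trans one_pos ha₂) hsol hrange v₀ hv0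
      (fun x => (hrange₀ x).2.1) lam c₁ R₀ mu B hlam hmu hmule hκ hB hBκ hR₀ h₁ e' he'
      (hu_bound e' he')
  -- the decay function
  have htend : Tendsto (fun t : ℝ => Real.exp (lam * (R₀ - (c - c₁) * t))
      + B * Real.exp (mu * (R₀ - (c - c₁) * t))) atTop (𝓝 0) := by
    have h3 : Tendsto (fun t : ℝ => R₀ - (c - c₁) * t) atTop atBot := by
      apply tendsto_atBot.mpr; intro b
      filter_upwards [eventually_ge_atTop ((R₀ - b) / (c - c₁))] with t ht
      rw [div_le_iff₀ (by linarith)] at ht; linarith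
    have h4 : Tendsto (fun t : ℝ => lam * (R₀ - (c - c₁) * t)) atTop atBot :=
      h3.const_mul_atBot hlam
    have h5 : Tendsto (fun t : ℝ => mu * (R₀ - (c - c₁) * t)) atTop atBot :=
      h3.const_mul_atBot hmu
    have e1 : Tendsto (fun t : ℝ => Real.exp (lam * (R₀ - (c - c₁) * t))) atTop (𝓝 0) :=
      Real.tendsto_exp_atBot.comp h4
    have e2 : Tendsto (fun t : ℝ => B * Real.exp (mu * (R₀ - (c - c₁) * t))) atTop (𝓝 (B * 0)) :=
      (Real.tendsto_exp_atBot.comp h5).const_mul B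
    have := e1.add e2
    simpa using this
  -- core estimate
  have core : ∀ ε : ℝ, 0 < ε → ∃ T₀ : ℝ, ∀ t : ℝ, T₀ ≤ t → 0 ≤ t → ∀ x : Euc N,
      ∀ e' : Euc N, ‖e'‖ = 1 → c * t ≤ (inner ℝ x e' : ℝ) → u t x + |1 - v t x| ≤ ε := by
    intro ε hε
    have hev : ∀ᶠ t in atTop, Real.exp (lam * (R₀ - (c - c₁) * t))
        + B * Real.exp (mu * (R₀ - (c - c₁) * t)) ≤ ε :=
      htend.eventually (eventually_le_nhds hε)
    obtain ⟨T₀, hT₀⟩ := eventually_atTop.mp hev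
    refine ⟨T₀, fun t ht ht0 x e' he' hx => ?_⟩
    have hu := hu_bound e' he' t ht0 x
    have hv := hv_bound e' he' t ht0 x
    have hv1 := (hrange t ht0 x).2.2
    have habs : |1 - v t x| = 1 - v t x := abs_of_nonneg (by linarith)
    have harg1 : (-lam) * (inner ℝ x e' : ℝ) + (lam * c₁ * t + lam * R₀)
        ≤ lam * (R₀ - (c - c₁) * t) := by
      have h := mul_le_mul_of_nonneg_left hx hlam.le
      linarith [h]
    have harg2 : (-mu) * (inner ℝ x e' : ℝ) + (mu * c₁ * t + mu * R₀)
        ≤ mu * (R₀ - (c - c₁) * t) := by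
      have h := mul_le_mul_of_nonneg_left hx hmu.le
      linarith [h]
    have h6 : u t x ≤ Real.exp (lam * (R₀ - (c - c₁) * t)) :=
      le_trans hu (Real.exp_le_exp.mpr harg1)
    have h7 : 1 - v t x ≤ B * Real.exp (mu * (R₀ - (c - c₁) * t)) :=
      le_trans hv (by
        apply mul_le_mul_of_nonneg_left (Real.exp_le_exp.mpr harg2) (by linarith))
    rw [habs]
    calc u t x + (1 - v t x)
        ≤ Real.exp (lam * (R₀ - (c - c₁) * t)) + B * Real.exp (mu * (R₀ - (c - c₁) * t)) := by
          linarith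
    _ ≤ ε := hT₀ t ht
  constructor
  · intro ε hε
    obtain ⟨T₀, hT₀⟩ := core ε hε
    refine ⟨max T₀ 0, fun t ht x hx => ?_⟩
    exact hT₀ t (le_trans (le_max_left _ _) ht) (le_trans (le_max_right _ _) ht) x e he hx
  · intro ε hε
    obtain ⟨T₀, hT₀⟩ := core ε hε
    refine ⟨max T₀ 1, fun t ht x hx => ?_⟩
    have ht1 : (1:ℝ) ≤ t := le_trans (le_max_right _ _) ht
    have ht0 : (0:ℝ) ≤ t := by linarith
    have hxpos : 0 < ‖x‖ := by
      have : 0 < c * t := mul_pos hcpos (by linarith)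
      linarith
    have hxne : x ≠ 0 := by
      intro h; rw [h, norm_zero] at hxpos; exact lt_irrefl 0 hxpos
    set e' : Euc N := ‖x‖⁻¹ • x with he'def
    have he' : ‖e'‖ = 1 := norm_smul_inv_norm hxne
    have hxe' : (inner ℝ x e' : ℝ) = ‖x‖ := by
      rw [he'def, real_inner_smul_right, real_inner_self_eq_norm_sq]
      field_simp
    exact hT₀ t (le_trans (le_max_left _ _) ht) ht0 x e' he' (by rw [hxe']; exact hx)

end
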